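/- Suppose the domain 𝒫_A satisfies, for each man, the condition that for every woman w there is an admissible preference ranking w first and ∅ second, and satisfies top dominance for women. Then the men-proposing deferred acceptance rule is the unique stable and strategy-proof matching rule on 𝒫_A, and it is moreover group strategy-proof. -/

import Mathlib

/-- A one-to-one matching between men `M` and women `W`; `none` means unmatched. -/
structure Matching (M W : Type*) where
  menMatch : M → Option W
  womenMatch : W → Option M
  consistent : ∀ m w, menMatch m = some w ↔ womenMatch w = some m

/-- A preference profile: each man has a strict linear order over `W ∪ {∅}`
(encoded as `Option W`, with `none` the outside option), and each woman over `M ∪ {∅}`. -/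
structure Profile (M W : Type*) where
  menPref : M → LinearOrder (Option W)
  womenPref : W → LinearOrder (Option M)

variable {M W : Type*}

def IndividuallyRational (μ : Matching M W) (P : Profile M W) : Prop :=
  (∀ m, (P.menPref m).le none (μ.menMatch m)) ∧
  (∀ w, (P.womenPref w).le none (μ.womenMatch w))

def Blocks (m : M) (w : W) (μ : Matching M W) (P : Profile M W) : Prop :=
  (P.menPref m).lt (μ.menMatch m) (some w) ∧
  (P.womenPref w).lt (μ.womenMatch w) (some m)

def Stable (μ : Matching M W) (P : Profile M W) : Prop :=
  IndividuallyRational μ P ∧ ∀ m w, ¬ Blocks m w μ P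

/-- The men-optimal stable matching: stable, and every man weakly prefers it to
any stable matching.  This characterizes the outcome of the men-proposing
deferred acceptance (MPDA) algorithm. -/
def MenOptimalStable (μ : Matching M W) (P : Profile M W) : Prop :=
  Stable μ P ∧
    ∀ ν : Matching M W, Stable ν P → ∀ m, (P.menPref m).le (ν.menMatch m) (μ.menMatch m)

/-- The women-optimal stable matching, i.e. the outcome of women-proposing DA. -/
def WomenOptimalStable (μ : Matching M W) (P : Profile M W) : Prop :=
  Stable μ P ∧
    ∀ ν : Matching M W, Stable ν P → ∀ w, (P.womenPref w).le (ν.womenMatch w) (μ.womenMatch w)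

def Matching.empty (M W : Type*) : Matching M W :=
  ⟨fun _ => none, fun _ => none, by intro m w; simp⟩

/-- The men-proposing deferred acceptance rule `D^M`. -/
noncomputable def mpda (P : Profile M W) : Matching M W :=
  letI := Classical.dec (∃ μ : Matching M W, MenOptimalStable μ P)
  if h : ∃ μ : Matching M W, MenOptimalStable μ P then h.choose else Matching.empty M W

/-- The women-proposing deferred acceptance rule `D^W`. -/
noncomputable def wpda (P : Profile M W) : Matching M W :=
  letI := Classical.dec (∃ μ : Matching M W, WomenOptimalStable μ P)
  if h : ∃ μ : Matching M W, WomenOptimalStable μ P then h.choose else Matching.empty M W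

/-- A domain of preference profiles: a set of admissible preferences for each agent. -/
structure Domain (M W : Type*) where
  men : M → Set (LinearOrder (Option W))
  women : W → Set (LinearOrder (Option M))

/-- Membership of a profile in (the product domain generated by) a domain. -/
def Domain.mem (D : Domain M W) (P : Profile M W) : Prop :=
  (∀ m, P.menPref m ∈ D.men m) ∧ (∀ w, P.womenPref w ∈ D.women w)

def Profile.updateMan [DecidableEq M] (P : Profile M W) (m : M)
    (p : LinearOrder (Option W)) : Profile M W :=
  ⟨Function.update P.menPref m p, P.womenPref⟩

def Profile.updateWoman [DecidableEq W] (P : Profile M W) (w : W)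
    (p : LinearOrder (Option M)) : Profile M W :=
  ⟨P.menPref, Function.update P.womenPref w p⟩

/-- A matching rule is stable on a domain if it selects a stable matching at
every profile of the domain. -/
def StableOn (D : Domain M W) (φ : Profile M W → Matching M W) : Prop :=
  ∀ P, D.mem P → Stable (φ P) P

/-- Strategy-proofness on a domain: no single agent can strictly gain by
misreporting an admissible preference. -/
def StrategyProofOn [DecidableEq M] [DecidableEq W] (D : Domain M W)
    (φ : Profile M W → Matching M W) : Prop :=
  ∀ P, D.mem P →
    (∀ m p, p ∈ D.men m →
      (P.menPref m).le ((φ (P.updateMan m p)).menMatch m) ((φ P).menMatch m)) ∧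
    (∀ w p, p ∈ D.women w →
      (P.womenPref w).le ((φ (P.updateWoman w p)).womenMatch w) ((φ P).womenMatch w))

/-- A coalition `(Sm, Sw)` manipulates `φ` at `P` via the admissible profile `Q`
(which agrees with `P` outside the coalition): every coalition member is
strictly better off at `φ Q` than at `φ P` according to true preferences. -/
def Manipulation (D : Domain M W) (φ : Profile M W → Matching M W)
    (P Q : Profile M W) (Sm : Set M) (Sw : Set W) : Prop :=
  D.mem P ∧ D.mem Q ∧
  (∀ m ∉ Sm, Q.menPref m = P.menPref m) ∧
  (∀ w ∉ Sw, Q.womenPref w = P.womenPref w) ∧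
  (∀ m ∈ Sm, (P.menPref m).lt ((φ P).menMatch m) ((φ Q).menMatch m)) ∧
  (∀ w ∈ Sw, (P.womenPref w).lt ((φ P).womenMatch w) ((φ Q).womenMatch w))

/-- Group strategy-proofness on a domain: no nonempty coalition can manipulate. -/
def GroupStrategyProofOn (D : Domain M W) (φ : Profile M W → Matching M W) : Prop :=
  ¬ ∃ (P Q : Profile M W) (Sm : Set M) (Sw : Set W),
      (Sm.Nonempty ∨ Sw.Nonempty) ∧ Manipulation D φ P Q Sm Sw

/-- Top dominance for women. -/
def TopDominanceWomen (D : Domain M W) : Prop :=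
  ∀ w : W, ∀ x : M, ∀ y z : Option M,
    (∃ P ∈ D.women w, P.lt y (some x) ∧ P.lt z y ∧ P.le none y) →
      ¬ ∃ P' ∈ D.women w, P'.lt z (some x) ∧ P'.lt y z ∧ P'.le none z

/-- Top dominance for men. -/
def TopDominanceMen (D : Domain M W) : Prop :=
  ∀ m : M, ∀ x : W, ∀ y z : Option W,
    (∃ P ∈ D.men m, P.lt y (some x) ∧ P.lt z y ∧ P.le none y) →
      ¬ ∃ P' ∈ D.men m, P'.lt z (some x) ∧ P'.lt y z ∧ P'.le none z

/-- Unrestricted top pairs for men. -/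
def UnrestrictedTopPairsMen (D : Domain M W) : Prop :=
  ∀ m : M,
    (∀ w w' : W, w ≠ w' → ∃ P ∈ D.men m, P.lt (some w') (some w) ∧
        ∀ z : Option W, z ≠ some w → z ≠ some w' → P.lt z (some w')) ∧
    (∀ w : W, ∃ P ∈ D.men m, P.lt none (some w) ∧
        ∀ z : Option W, z ≠ some w → z ≠ none → P.lt z none) ∧
    (∃ P ∈ D.men m, ∀ z : Option W, z ≠ none → P.lt z none)

/-- Unrestricted top pairs for women. -/
def UnrestrictedTopPairsWomen (D : Domain M W) : Prop :=
  ∀ w : W,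
    (∀ m m' : M, m ≠ m' → ∃ P ∈ D.women w, P.lt (some m') (some m) ∧
        ∀ z : Option M, z ≠ some m → z ≠ some m' → P.lt z (some m')) ∧
    (∀ m : M, ∃ P ∈ D.women w, P.lt none (some m) ∧
        ∀ z : Option M, z ≠ some m → z ≠ none → P.lt z none) ∧
    (∃ P ∈ D.women w, ∀ z : Option M, z ≠ none → P.lt z none)

/-- Single-peakedness of a preference over `Option α` with respect to a prior
order `ord` on `α`:  moving away from the peak (the most preferred element of
`α`) on either side makes the preference decline. -/
def SinglePeaked {α : Type*} (ord : LinearOrder α) (P : LinearOrder (Option α)) : Prop :=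
  ∀ peak : α, (∀ a : α, P.le (some a) (some peak)) →
    ∀ a b : α, ((ord.le peak a ∧ ord.lt a b) ∨ (ord.lt b a ∧ ord.le a peak)) →
      P.lt (some b) (some a)

/-- The maximal single-peaked domain with respect to orders on men and women. -/
def maximalSinglePeakedDomain (ordM : LinearOrder M) (ordW : LinearOrder W) : Domain M W :=
  ⟨fun _ => {P | SinglePeaked ordW P}, fun _ => {P | SinglePeaked ordM P}⟩

/-- A domain is single-peaked if all admissible preferences are single-peaked. -/
def Domain.SinglePeakedDomain (D : Domain M W) (ordM : LinearOrder M)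
    (ordW : LinearOrder W) : Prop :=
  (∀ m, ∀ P ∈ D.men m, SinglePeaked ordW P) ∧ (∀ w, ∀ P ∈ D.women w, SinglePeaked ordM P)

/-- Anonymity: all men share the same admissible set, and all women do too. -/
def Domain.Anonymous (D : Domain M W) : Prop :=
  (∀ m m' : M, D.men m = D.men m') ∧ (∀ w w' : W, D.women w = D.women w')

/-- Cyclical inclusion for men. -/
def CyclicalInclusionMen (D : Domain M W) : Prop :=
  ∀ m : M,
    (∃ P ∈ D.men m, ∀ z : Option W, z ≠ none → P.lt z none) ∧
    (∀ w w' : W,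
      (∃ P ∈ D.men m, P.lt (some w') (some w) ∧ P.lt none (some w')) →
      (∃ P ∈ D.men m, P.lt (some w) (some w') ∧ P.lt none (some w)))

/-- Cyclical inclusion for women. -/
def CyclicalInclusionWomen (D : Domain M W) : Prop :=
  ∀ w : W,
    (∃ P ∈ D.women w, ∀ z : Option M, z ≠ none → P.lt z none) ∧
    (∀ m m' : M,
      (∃ P ∈ D.women w, P.lt (some m') (some m) ∧ P.lt none (some m')) →
      (∃ P ∈ D.women w, P.lt (some m) (some m') ∧ P.lt none (some m)))

/-- The unrestricted domain: every strict linear order is admissible. -/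
def fullDomain (M W : Type*) : Domain M W :=
  ⟨fun _ => Set.univ, fun _ => Set.univ⟩


namespace DA

attribute [local instance] Classical.propDecidable

section OrderLemmas
variable {α : Type*} (L : LinearOrder α)
theorem lle_refl (a : α) : L.le a a := letI := L; le_refl a
theorem lle_trans {a b c : α} (h₁ : L.le a b) (h₂ : L.le b c) : L.le a c := letI := L; le_trans h₁ h₂
theorem lle_total (a b : α) : L.le a b ∨ L.le b a := letI := L; le_total a b
theorem lle_antisymm {a b : α} (h₁ : L.le a b) (h₂ : L.le b a) : a = b := letI := L; le_antisymm h₁ h₂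
theorem llt_iff_le_ne {a b : α} : L.lt a b ↔ L.le a b ∧ a ≠ b := letI := L; lt_iff_le_and_ne
theorem lnot_le {a b : α} : ¬ L.le a b ↔ L.lt b a := letI := L; not_le
theorem lnot_lt {a b : α} : ¬ L.lt a b ↔ L.le b a := letI := L; not_lt
theorem lle_of_lt {a b : α} (h : L.lt a b) : L.le a b := letI := L; le_of_lt h
theorem llt_of_le_of_lt {a b c : α} (h : L.le a b) (h' : L.lt b c) : L.lt a c := letI := L; lt_of_le_of_lt h h'
theorem llt_of_lt_of_le {a b c : α} (h : L.lt a b) (h' : L.le b c) : L.lt a c := letI := L; lt_of_lt_of_le h h'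
theorem llt_trans {a b c : α} (h : L.lt a b) (h' : L.lt b c) : L.lt a c := letI := L; lt_trans h h'
theorem llt_irrefl {a : α} (h : L.lt a a) : False := letI := L; lt_irrefl a h
theorem llt_asymm {a b : α} (h : L.lt a b) (h' : L.lt b a) : False := letI := L; lt_asymm h h'
theorem llt_of_le_of_ne {a b : α} (h : L.le a b) (h' : a ≠ b) : L.lt a b := (llt_iff_le_ne L).2 ⟨h, h'⟩
theorem lle_of_not_lt {a b : α} (h : ¬ L.lt a b) : L.le b a := (lnot_lt L).1 h
theorem llt_ne {a b : α} (h : L.lt a b) : a ≠ b := ((llt_iff_le_ne L).1 h).2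
end OrderLemmas

noncomputable def maxW {α : Type*} (L : LinearOrder α) (s : Finset α) (h : s.Nonempty) : α :=
  letI := L; s.max' h
theorem maxW_mem {α : Type*} (L : LinearOrder α) (s : Finset α) (h : s.Nonempty) :
    maxW L s h ∈ s := letI := L; s.max'_mem h
theorem le_maxW {α : Type*} (L : LinearOrder α) {s : Finset α} (h : s.Nonempty) {a : α}
    (ha : a ∈ s) : L.le a (maxW L s h) := letI := L; s.le_max' a ha

variable {M W : Type*}

/-- Build a matching from a men-side function that hits each woman at most once. -/
noncomputable def mkMatching (f : M → Option W)
    (hf : ∀ m m' w, f m = some w → f m' = some w → m = m') : Matching M W where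
  menMatch := f
  womenMatch := fun w => if h : ∃ m, f m = some w then some (Classical.choose h) else none
  consistent := by
    intro m w
    constructor
    · intro hm
      have hex : ∃ m', f m' = some w := ⟨m, hm⟩
      rw [dif_pos hex]
      exact congrArg some (hf _ _ _ (Classical.choose_spec hex) hm)
    · intro hm
      by_cases hex : ∃ m', f m' = some w
      · rw [dif_pos hex] at hm
        have := Classical.choose_spec hex
        rwa [Option.some_inj.mp hm] at this
      · rw [dif_neg hex] at hm; exact absurd hm (by simp)

theorem mkMatching_women_none {f : M → Option W} {hf : ∀ m m' w, f m = some w → f m' = some w → m = m'}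
    {w : W} (h : ¬ ∃ m, f m = some w) : (mkMatching f hf).womenMatch w = none := by
  simp only [mkMatching]
  exact dif_neg h

theorem Matching.ext' {μ ν : Matching M W} (h : ∀ m, μ.menMatch m = ν.menMatch m) : μ = ν := by
  obtain ⟨f, g, c⟩ := μ; obtain ⟨f', g', c'⟩ := ν
  have hf : f = f' := funext h
  subst hf
  have hg : g = g' := by
    funext w
    cases hgw : g w with
    | none =>
      cases hgw' : g' w with
      | none => rfl
      | some m =>
        have hgm : g w = some m := (c m w).1 ((c' m w).2 hgw')
        rw [hgw] at hgm; cases hgm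
    | some m =>
      exact ((c' m w).1 ((c m w).2 hgw)).symm
  subst hg
  rfl

open Finset
set_option linter.unusedSectionVars false

variable [Fintype M] [Fintype W] [DecidableEq M] [DecidableEq W]

variable (P : Profile M W)

/-- Candidate partners for man `m` given rejection sets `A`. -/
noncomputable def cands (A : M → Finset W) (m : M) : Finset (Option W) :=
  insert none ((univ \ A m).image some)

theorem cands_ne (A : M → Finset W) (m : M) : (cands A m).Nonempty :=
  ⟨none, mem_insert_self _ _⟩

theorem mem_cands {A : M → Finset W} {m : M} {o : Option W} :
    o ∈ cands A m ↔ o = none ∨ ∃ w, w ∉ A m ∧ o = some w := by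
  simp [cands, eq_comm]

noncomputable def best (A : M → Finset W) (m : M) : Option W :=
  maxW (P.menPref m) (cands A m) (cands_ne A m)

theorem le_best {A : M → Finset W} {m : M} {o : Option W} (ho : o ∈ cands A m) :
    (P.menPref m).le o (best P A m) := le_maxW _ _ ho

theorem none_le_best (A : M → Finset W) (m : M) : (P.menPref m).le none (best P A m) :=
  le_best P (mem_insert_self _ _)

theorem best_mem (A : M → Finset W) (m : M) : best P A m ∈ cands A m := maxW_mem _ _ _

theorem best_eq_some_not_mem {A : M → Finset W} {m : M} {w : W}
    (h : best P A m = some w) : w ∉ A m := by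
  have := best_mem P A m
  rw [h, mem_cands] at this
  rcases this with h' | ⟨w', hw', he⟩
  · exact absurd h' (by simp)
  · rwa [(Option.some_inj.mp he.symm)] at hw'

theorem le_best_of_not_mem {A : M → Finset W} {m : M} {w : W} (h : w ∉ A m) :
    (P.menPref m).le (some w) (best P A m) :=
  le_best P (mem_cands.mpr (Or.inr ⟨w, h, rfl⟩))

theorem cands_anti {A B : M → Finset W} {m : M} (h : A m ⊆ B m) : cands B m ⊆ cands A m := by
  intro o ho
  rw [mem_cands] at ho ⊢
  rcases ho with h' | ⟨w, hw, he⟩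
  · exact Or.inl h'
  · exact Or.inr ⟨w, fun hc => hw (h hc), he⟩

theorem best_anti {A B : M → Finset W} {m : M} (h : A m ⊆ B m) :
    (P.menPref m).le (best P B m) (best P A m) :=
  le_best P (cands_anti h (best_mem P B m))

/-- Men proposing to woman `w`. -/
noncomputable def props (A : M → Finset W) (w : W) : Finset M :=
  univ.filter (fun m => best P A m = some w)

theorem mem_props {A : M → Finset W} {w : W} {m : M} :
    m ∈ props P A w ↔ best P A m = some w := by simp [props]

noncomputable def wcands (A : M → Finset W) (w : W) : Finset (Option M) :=
  insert none ((props P A w).image some)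

/-- The proposer retained by woman `w` (or `none`). -/
theorem wcands_ne (A : M → Finset W) (w : W) : (wcands P A w).Nonempty :=
  ⟨none, mem_insert_self _ _⟩

noncomputable def wchoice (A : M → Finset W) (w : W) : Option M :=
  maxW (P.womenPref w) (wcands P A w) (wcands_ne P A w)

theorem le_wchoice {A : M → Finset W} {w : W} {m : M} (h : m ∈ props P A w) :
    (P.womenPref w).le (some m) (wchoice P A w) :=
  le_maxW _ _ (by
    simp only [wcands, mem_insert, mem_image]
    exact Or.inr ⟨m, h, rfl⟩)

theorem none_le_wchoice (A : M → Finset W) (w : W) :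
    (P.womenPref w).le none (wchoice P A w) :=
  le_maxW _ _ (mem_insert_self _ _)

theorem wchoice_some {A : M → Finset W} {w : W} {m : M} (h : wchoice P A w = some m) :
    best P A m = some w := by
  have hm := maxW_mem (P.womenPref w) (wcands P A w) (wcands_ne P A w)
  rw [show maxW (P.womenPref w) (wcands P A w) (wcands_ne P A w) = wchoice P A w from rfl, h] at hm
  simp only [wcands, mem_insert, mem_image] at hm
  rcases hm with h' | ⟨m', hm', he⟩
  · exact absurd h' (by simp)
  · cases Option.some_inj.mp he.symm; exact (mem_props P).mp hm'

/-- One round of deferred acceptance: add all new rejections. -/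
noncomputable def step (A : M → Finset W) : M → Finset W := fun m =>
  A m ∪ univ.filter (fun w => best P A m = some w ∧ wchoice P A w ≠ some m)

theorem mem_step {A : M → Finset W} {m : M} {w : W} :
    w ∈ step P A m ↔ w ∈ A m ∨ (best P A m = some w ∧ wchoice P A w ≠ some m) := by
  simp [step]

theorem subset_step (A : M → Finset W) (m : M) : A m ⊆ step P A m := subset_union_left

noncomputable def trace : ℕ → M → Finset W
  | 0 => fun _ => ∅
  | (t + 1) => step P (trace t)

theorem trace_mono {s t : ℕ} (h : s ≤ t) (m : M) : trace P s m ⊆ trace P t m := by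
  induction t with
  | zero => cases Nat.le_zero.mp h; exact subset_rfl
  | succ t ih =>
    rcases Nat.lt_or_ge s (t+1) with h' | h'
    · exact (ih (Nat.lt_succ_iff.mp h')).trans (subset_step P (trace P t) m)
    · cases le_antisymm h h'; exact subset_rfl

theorem best_trace_anti {s t : ℕ} (h : s ≤ t) (m : M) :
    (P.menPref m).le (best P (trace P t) m) (best P (trace P s) m) :=
  best_anti P (trace_mono P h m)

/-- Total number of recorded rejections. -/
noncomputable def msr (A : M → Finset W) : ℕ := ∑ m, (A m).card

theorem msr_lt_of_ne {A : M → Finset W} (h : step P A ≠ A) : msr A < msr (step P A) := by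
  have hex : ∃ m, A m ≠ step P A m := by
    by_contra hc
    push_neg at hc
    exact h (funext fun m => (hc m).symm)
  obtain ⟨m₀, hm₀⟩ := hex
  refine Finset.sum_lt_sum (fun m _ => card_le_card (subset_step P A m)) ⟨m₀, mem_univ _, ?_⟩
  exact card_lt_card (Finset.ssubset_iff_subset_ne.mpr ⟨subset_step P A m₀, hm₀⟩)

theorem msr_le (A : M → Finset W) : msr A ≤ Fintype.card M * Fintype.card W := by
  calc msr A ≤ ∑ _m : M, Fintype.card W :=
        Finset.sum_le_sum (fun m _ => by
          simpa using card_le_card (subset_univ (A m)))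
    _ = Fintype.card M * Fintype.card W := by simp [Finset.sum_const, mul_comm]

theorem trace_absorb {s : ℕ} (h : step P (trace P s) = trace P s) :
    ∀ t, s ≤ t → trace P t = trace P s := by
  intro t ht
  induction t with
  | zero => cases Nat.le_zero.mp ht; rfl
  | succ t ih =>
    rcases Nat.lt_or_ge s (t+1) with h' | h'
    · have := ih (Nat.lt_succ_iff.mp h')
      show step P (trace P t) = trace P s
      rw [this, h]
    · cases le_antisymm ht h'; rfl

/-- The bound on the number of rounds. -/
noncomputable def Fb (M W : Type*) [Fintype M] [Fintype W] : ℕ :=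
  Fintype.card M * Fintype.card W

theorem fix_final : step P (trace P (Fb M W)) = trace P (Fb M W) := by
  by_contra hne
  have hnofix : ∀ s ≤ Fb M W, step P (trace P s) ≠ trace P s := by
    intro s hs hfix
    apply hne
    rw [trace_absorb P hfix _ hs]
    exact hfix
  have key : ∀ t ≤ Fb M W + 1, t ≤ msr (trace P t) := by
    intro t
    induction t with
    | zero => intro _; exact Nat.zero_le _
    | succ t ih =>
      intro ht
      have h1 : t ≤ msr (trace P t) := ih (Nat.le_of_succ_le ht)
      have h2 : msr (trace P t) < msr (step P (trace P t)) :=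
        msr_lt_of_ne P (hnofix t (Nat.lt_succ_iff.mp ht))
      exact Nat.succ_le_of_lt (lt_of_le_of_lt h1 h2)
  have := key (Fb M W + 1) le_rfl
  have hb := msr_le (trace P (Fb M W + 1))
  have hFb : Fb M W = Fintype.card M * Fintype.card W := rfl
  omega

/-- The final rejection state. -/
noncomputable def finalA : M → Finset W := trace P (Fb M W)

theorem final_no_rej {m : M} {w : W} (h : best P (finalA P) m = some w) :
    wchoice P (finalA P) w = some m := by
  by_contra hc
  have hmem : w ∈ step P (finalA P) m := (mem_step P).mpr (Or.inr ⟨h, hc⟩)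
  rw [show step P (finalA P) = finalA P from fix_final P] at hmem
  exact best_eq_some_not_mem P h hmem

theorem trace_ge_final {t : ℕ} (h : Fb M W ≤ t) : trace P t = finalA P :=
  trace_absorb P (fix_final P) t h

/-- The deferred-acceptance matching. -/
noncomputable def daMatch : Matching M W :=
  mkMatching (fun m => best P (finalA P) m) (by
    intro m m' w hm hm'
    have h1 := final_no_rej P hm
    have h2 := final_no_rej P hm'
    rw [h1] at h2
    exact Option.some_inj.mp h2)

theorem daMatch_men (m : M) : (daMatch P).menMatch m = best P (finalA P) m := rfl

theorem daMatch_women (w : W) : (daMatch P).womenMatch w = wchoice P (finalA P) w := by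
  cases h : wchoice P (finalA P) w with
  | none =>
    apply mkMatching_women_none
    rintro ⟨m, hm⟩
    rw [final_no_rej P hm] at h
    cases h
  | some m =>
    exact ((daMatch P).consistent m w).mp (wchoice_some P h)

/-- No stable matching ever pairs a man with a woman who rejected him. -/
theorem inv_stable (ν : Matching M W) (hν : Stable ν P) :
    ∀ t m w, w ∈ trace P t m → ν.menMatch m ≠ some w := by
  intro t
  induction t with
  | zero => intro m w h; cases h
  | succ t ih =>
    intro m w hw hcontra
    rcases (mem_step P).mp hw with hold | ⟨hb, hc⟩
    · exact ih m w hold hcontra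
    · -- w rejected m at round t although ν matches them: find blocking pair
      have hwm : ν.womenMatch w = some m := (ν.consistent m w).mp hcontra
      have hmprop : m ∈ props P (trace P t) w := (mem_props P).mpr hb
      have hle : (P.womenPref w).le (some m) (wchoice P (trace P t) w) := le_wchoice P hmprop
      cases hcw : wchoice P (trace P t) w with
      | none =>
        rw [hcw] at hle
        have hIR : (P.womenPref w).le none (ν.womenMatch w) := hν.1.2 w
        rw [hwm] at hIR
        cases lle_antisymm _ hle hIR
      | some m' =>
        rw [hcw] at hle hc
        have hm'prop := wchoice_some P hcw
        have hne : m ≠ m' := fun he => hc (by rw [he])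
        have hblock : Blocks m' w ν P := by
          constructor
          · -- ν.menMatch m' < some w
            cases hνm' : ν.menMatch m' with
            | none =>
              have : (P.menPref m').le none (some w) := by
                rw [← hm'prop]; exact none_le_best P _ _
              rw [← hm'prop]
              rw [← hm'prop] at this
              exact llt_of_le_of_ne _ (by rw [hm'prop]; exact hm'prop ▸ this) (by
                rw [hm'prop]; exact fun h => by cases h)
            | some w'' =>
              have hnm : w'' ∉ trace P t m' := fun hmem => ih m' w'' hmem hνm'
              have hle2 : (P.menPref m').le (some w'') (best P (trace P t) m') :=
                le_best_of_not_mem P hnm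
              rw [hm'prop] at hle2
              have hne2 : w'' ≠ w := by
                intro he
                subst he
                have : ν.womenMatch w'' = some m' := (ν.consistent m' w'').mp hνm'
                rw [hwm] at this
                exact hne (Option.some_inj.mp this)
              exact llt_of_le_of_ne _ hle2 (fun h => hne2 (Option.some_inj.mp h))
          · rw [hwm]
            exact llt_of_le_of_ne _ hle (fun h => hne (Option.some_inj.mp h))
        exact hν.2 m' w hblock

theorem wchoice_mono_one (A : M → Finset W) (w : W) :
    (P.womenPref w).le (wchoice P A w) (wchoice P (step P A) w) := by
  cases h : wchoice P A w with
  | none => exact none_le_wchoice P _ _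
  | some m =>
    have hb : best P A m = some w := wchoice_some P h
    have hstep : step P A m = A m := by
      apply Finset.union_eq_left.mpr
      intro w' hw'
      simp only [Finset.mem_filter, Finset.mem_univ, true_and] at hw'
      rw [hb] at hw'
      cases Option.some_inj.mp hw'.1
      exact absurd h hw'.2
    have hbs : best P (step P A) m = some w := by
      have : cands (step P A) m = cands A m := by
        unfold cands; rw [hstep]
      unfold best
      rw [show maxW (P.menPref m) (cands (step P A) m) (cands_ne _ m)
            = maxW (P.menPref m) (cands A m) (cands_ne A m) from by congr 1] 
      exact hb
    exact le_wchoice P ((mem_props P).mpr hbs)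

theorem wchoice_mono {s t : ℕ} (h : s ≤ t) (w : W) :
    (P.womenPref w).le (wchoice P (trace P s) w) (wchoice P (trace P t) w) := by
  induction t with
  | zero => cases Nat.le_zero.mp h; exact lle_refl _ _
  | succ t ih =>
    rcases Nat.lt_or_ge s (t+1) with h' | h'
    · exact lle_trans _ (ih (Nat.lt_succ_iff.mp h')) (wchoice_mono_one P (trace P t) w)
    · cases le_antisymm h h'; exact lle_refl _ _

/-- A rejected man is below the woman's current choice. -/
theorem rejected_lt_wchoice : ∀ t (m : M) (w : W), w ∈ trace P t m →
    (P.womenPref w).lt (some m) (wchoice P (trace P t) w) := by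
  intro t
  induction t with
  | zero => intro m w h; cases h
  | succ t ih =>
    intro m w hw
    rcases (mem_step P).mp hw with hold | ⟨hb, hc⟩
    · exact llt_of_lt_of_le _ (ih m w hold) (wchoice_mono_one P (trace P t) w)
    · have hle : (P.womenPref w).le (some m) (wchoice P (trace P t) w) :=
        le_wchoice P ((mem_props P).mpr hb)
      have hlt : (P.womenPref w).lt (some m) (wchoice P (trace P t) w) :=
        llt_of_le_of_ne _ hle (fun h => hc h.symm)
      exact llt_of_lt_of_le _ hlt (wchoice_mono_one P (trace P t) w)

theorem daMatch_stable : Stable (daMatch P) P := by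
  refine ⟨⟨fun m => ?_, fun w => ?_⟩, fun m w hblk => ?_⟩
  · rw [daMatch_men]; exact none_le_best P _ _
  · rw [daMatch_women]; exact none_le_wchoice P _ _
  · obtain ⟨h1, h2⟩ := hblk
    rw [daMatch_men] at h1
    rw [daMatch_women] at h2
    have hmem : w ∈ finalA P m := by
      by_contra hnm
      exact llt_asymm _ h1 (llt_of_le_of_ne _ (le_best_of_not_mem P hnm)
        (fun he => (llt_ne _ h1) he.symm)) 
    have := rejected_lt_wchoice P (Fb M W) m w hmem
    exact llt_asymm _ h2 this

theorem daMatch_menOpt : MenOptimalStable (daMatch P) P := by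
  refine ⟨daMatch_stable P, fun ν hν m => ?_⟩
  rw [daMatch_men]
  cases hνm : ν.menMatch m with
  | none => exact none_le_best P _ _
  | some w =>
    have : w ∉ finalA P m := fun hmem => inv_stable P ν hν _ m w hmem hνm
    exact le_best_of_not_mem P this

theorem exists_menOpt : ∃ μ : Matching M W, MenOptimalStable μ P := ⟨daMatch P, daMatch_menOpt P⟩

theorem mpda_spec : MenOptimalStable (mpda P) P := by
  have h : ∃ μ : Matching M W, MenOptimalStable μ P := exists_menOpt P
  rw [mpda, dif_pos h]
  exact h.choose_spec

theorem menOpt_unique {μ ν : Matching M W} (h1 : MenOptimalStable μ P)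
    (h2 : MenOptimalStable ν P) : μ = ν :=
  Matching.ext' (fun m => lle_antisymm _ (h2.2 μ h1.1 m) (h1.2 ν h2.1 m))

theorem mpda_eq_daMatch : mpda P = daMatch P :=
  menOpt_unique P (mpda_spec P) (daMatch_menOpt P)

/-- Men-optimal implies women-pessimal. -/
theorem women_pessimal {μ : Matching M W} (hμ : MenOptimalStable μ P)
    {ν : Matching M W} (hν : Stable ν P) (w : W) :
    (P.womenPref w).le (μ.womenMatch w) (ν.womenMatch w) := by
  by_contra hc
  have hlt : (P.womenPref w).lt (ν.womenMatch w) (μ.womenMatch w) := (lnot_le _).mp hc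
  cases hμw : μ.womenMatch w with
  | none =>
    rw [hμw] at hlt
    exact llt_irrefl _ (llt_of_le_of_lt _ (hν.1.2 w) hlt)
  | some m =>
    rw [hμw] at hlt
    have hμm : μ.menMatch m = some w := (μ.consistent m w).mpr hμw
    have hνm : ν.menMatch m ≠ some w := by
      intro he
      have : ν.womenMatch w = some m := (ν.consistent m w).mp he
      rw [this] at hlt
      exact llt_irrefl _ hlt
    have hle : (P.menPref m).le (ν.menMatch m) (μ.menMatch m) := hμ.2 ν hν m
    rw [hμm] at hle
    exact hν.2 m w ⟨llt_of_le_of_ne _ hle (fun h => hνm h), hlt⟩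

noncomputable def mFin (μ : Matching M W) : Finset M := univ.filter (fun m => μ.menMatch m ≠ none)
noncomputable def wFin (μ : Matching M W) : Finset W := univ.filter (fun w => μ.womenMatch w ≠ none)

theorem mem_mFin_some {μ : Matching M W} {m : M} (hm : m ∈ mFin μ) :
    ∃ w, μ.menMatch m = some w := by
  simp only [mFin, Finset.mem_filter, Finset.mem_univ, true_and] at hm
  cases h : μ.menMatch m with
  | none => exact absurd h hm
  | some w => exact ⟨w, rfl⟩

theorem card_mFin_eq (μ : Matching M W) : (mFin μ).card = (wFin μ).card := by
  apply Finset.card_bij (fun m hm => Classical.choose (mem_mFin_some hm))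
  · intro m hm
    have hsome := Classical.choose_spec (mem_mFin_some hm)
    have := (μ.consistent m _).mp hsome
    simp only [wFin, Finset.mem_filter, Finset.mem_univ, true_and]
    rw [this]
    simp
  · intro m₁ hm₁ m₂ hm₂ he
    have h₁ := Classical.choose_spec (mem_mFin_some hm₁)
    have h₂ := Classical.choose_spec (mem_mFin_some hm₂)
    rw [he] at h₁
    have c₁ := (μ.consistent m₁ _).mp h₁
    have c₂ := (μ.consistent m₂ _).mp h₂
    rw [c₂] at c₁
    exact (Option.some_inj.mp c₁).symm
  · intro w hw
    simp only [wFin, Finset.mem_filter, Finset.mem_univ, true_and] at hw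
    cases hww : μ.womenMatch w with
    | none => exact absurd hww hw
    | some m =>
      have hmm : μ.menMatch m = some w := (μ.consistent m w).mpr hww
      have hmem : m ∈ mFin μ := by
        simp only [mFin, Finset.mem_filter, Finset.mem_univ, true_and]
        rw [hmm]; simp
      refine ⟨m, hmem, ?_⟩
      have hcs := Classical.choose_spec (mem_mFin_some hmem)
      exact Option.some_inj.mp (hcs.symm.trans hmm)

/-- Every man matched in a stable matching is matched in the men-optimal one and conversely. -/
theorem matched_eq {μ : Matching M W} (hμ : MenOptimalStable μ P)
    {σ : Matching M W} (hσ : Stable σ P) : mFin σ = mFin μ := by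
  have hsub : mFin σ ⊆ mFin μ := by
    intro m hm
    simp only [mFin, Finset.mem_filter, Finset.mem_univ, true_and] at hm ⊢
    cases hσm : σ.menMatch m with
    | none => exact absurd hσm hm
    | some w =>
      intro hμm
      have hle := hμ.2 σ hσ m
      rw [hσm, hμm] at hle
      have hIR := hσ.1.1 m
      rw [hσm] at hIR
      exact llt_irrefl _ (llt_of_le_of_lt _ hle
        (llt_of_le_of_ne _ hIR (fun h => by cases h)))
  have hsubw : wFin μ ⊆ wFin σ := by
    intro w hw
    simp only [wFin, Finset.mem_filter, Finset.mem_univ, true_and] at hw ⊢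
    cases hμw : μ.womenMatch w with
    | none => exact absurd hμw hw
    | some m =>
      intro hσw
      have hle := women_pessimal P hμ hσ w
      rw [hμw, hσw] at hle
      have hIR := hμ.1.1.2 w
      rw [hμw] at hIR
      exact llt_irrefl _ (llt_of_le_of_lt _ hle
        (llt_of_le_of_ne _ hIR (fun h => by cases h)))
  apply Finset.eq_of_subset_of_card_le hsub
  calc (mFin μ).card = (wFin μ).card := card_mFin_eq μ
    _ ≤ (wFin σ).card := Finset.card_le_card hsubw
    _ = (mFin σ).card := (card_mFin_eq σ).symm

theorem best_change {t : ℕ} {m : M} {w : W} (h1 : best P (trace P t) m = some w)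
    (h2 : best P (trace P (t+1)) m ≠ some w) :
    wchoice P (trace P t) w ≠ some m := by
  have hmem : w ∈ trace P (t+1) m := by
    by_contra hnm
    have hle := le_best_of_not_mem P hnm
    have hle2 := best_trace_anti P (Nat.le_succ t) m
    rw [h1] at hle2
    exact h2 (lle_antisymm _ hle2 hle)
  rcases (mem_step P).mp hmem with hold | ⟨_, hc⟩
  · exact absurd hold (best_eq_some_not_mem P h1)
  · exact hc

theorem exists_entry {t : ℕ} {m : M} {w : W} (h : w ∈ trace P t m) :
    ∃ s, s < t ∧ best P (trace P s) m = some w ∧ wchoice P (trace P s) w ≠ some m := by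
  induction t with
  | zero => cases h
  | succ t ih =>
    by_cases h' : w ∈ trace P t m
    · obtain ⟨s, hs, h3⟩ := ih h'
      exact ⟨s, hs.trans (Nat.lt_succ_self t), h3⟩
    · rcases (mem_step P).mp h with hold | ⟨hb, hc⟩
      · exact absurd hold h'
      · exact ⟨t, Nat.lt_succ_self t, hb, hc⟩

theorem rej_bound {t : ℕ} {m : M} {w : W} (h1 : best P (trace P t) m = some w)
    (h2 : wchoice P (trace P t) w ≠ some m) : t < Fb M W := by
  by_contra hge
  push_neg at hge
  rw [trace_ge_final P hge] at h1 h2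
  exact h2 (final_no_rej P h1)

theorem exists_change {α : Type*} {f : ℕ → α} {v : α} {a b : ℕ} (h1 : f a = v) (h2 : f b ≠ v)
    (hab : a ≤ b) : ∃ t, a ≤ t ∧ t < b ∧ f t = v ∧ f (t+1) ≠ v := by
  induction b with
  | zero => cases Nat.le_zero.mp hab; exact absurd h1 h2
  | succ b ih =>
    have hab' : a ≤ b := by
      rcases Nat.lt_or_ge a (b+1) with h | h
      · exact Nat.lt_succ_iff.mp h
      · cases le_antisymm hab h; exact absurd h1 h2
    by_cases hfb : f b = v
    · exact ⟨b, hab', Nat.lt_succ_self _, hfb, h2⟩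
    · obtain ⟨t, h₁, h₂, h₃, h₄⟩ := ih hfb hab'
      exact ⟨t, h₁, h₂.trans (Nat.lt_succ_self _), h₃, h₄⟩

/-- The Blocking Lemma. -/
theorem blocking_lemma (μ' : Matching M W) (hIR : IndividuallyRational μ' P)
    (hne : ∃ m, (P.menPref m).lt ((daMatch P).menMatch m) (μ'.menMatch m)) :
    ∃ m w, ¬ (P.menPref m).lt ((daMatch P).menMatch m) (μ'.menMatch m) ∧
      (∃ m'', (P.menPref m'').lt ((daMatch P).menMatch m'') (μ'.menMatch m'') ∧
        μ'.menMatch m'' = some w) ∧ Blocks m w μ' P := by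
  set μ := daMatch P with hμdef
  set pred := fun m => (P.menPref m).lt (μ.menMatch m) (μ'.menMatch m) with hpreddef
  have pred_some : ∀ m, pred m → ∃ w, μ'.menMatch m = some w := by
    intro m hp
    have hp' : (P.menPref m).lt (μ.menMatch m) (μ'.menMatch m) := hp
    cases h : μ'.menMatch m with
    | none =>
      rw [h] at hp'
      exact absurd (llt_of_le_of_lt _ ((daMatch_stable P).1.1 m) hp')
        (fun hc => llt_irrefl _ hc)
    | some w => exact ⟨w, rfl⟩
  obtain ⟨m₁, hm₁⟩ := hne
  by_cases hc1 : ∃ w, (∃ m, pred m ∧ μ'.menMatch m = some w) ∧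
      ¬ ∃ m, pred m ∧ μ.menMatch m = some w
  · -- Case 1
    obtain ⟨w, ⟨m', hpred', hμ'm'⟩, hnot⟩ := hc1
    have hμ'w : μ'.womenMatch w = some m' := (μ'.consistent m' w).mp hμ'm'
    have hIRw : (P.womenPref w).le none (some m') := by
      have := hIR.2 w; rwa [hμ'w] at this
    have hblk1 : (P.menPref m').lt (μ.menMatch m') (some w) := hμ'm' ▸ hpred'
    have hlew : (P.womenPref w).le (some m') (μ.womenMatch w) :=
      lle_of_not_lt _ (fun h => (daMatch_stable P).2 m' w ⟨hblk1, h⟩)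
    cases hμw : μ.womenMatch w with
    | none =>
      rw [hμw] at hlew
      cases lle_antisymm _ hlew hIRw
    | some m =>
      have hμm : μ.menMatch m = some w := (μ.consistent m w).mpr hμw
      have hnpred : ¬ pred m := fun hp => hnot ⟨m, hp, hμm⟩
      have hle2 : (P.menPref m).le (μ'.menMatch m) (μ.menMatch m) := lle_of_not_lt _ hnpred
      rw [hμm] at hle2
      have hmm' : m ≠ m' := fun he => hnpred (he ▸ hpred')
      have hne3 : μ'.menMatch m ≠ some w := by
        intro he
        have : μ'.womenMatch w = some m := (μ'.consistent m w).mp he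
        rw [hμ'w] at this
        exact hmm' (Option.some_inj.mp this).symm
      refine ⟨m, w, hnpred, ⟨m', hpred', hμ'm'⟩, llt_of_le_of_ne _ hle2 hne3, ?_⟩
      rw [hμ'w]
      rw [hμw] at hlew
      exact llt_of_le_of_ne _ hlew (fun h => hmm' (Option.some_inj.mp h).symm)
  · -- Case 2
    push_neg at hc1
    -- counting: every `pred` man is matched by μ to a woman in W'
    have hall : ∀ m, pred m → ∃ w₂, μ.menMatch m = some w₂ ∧
        ∃ m'', pred m'' ∧ μ'.menMatch m'' = some w₂ := by
      classical
      set Mset : Finset M := univ.filter pred with hMset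
      set W' : Finset W := univ.filter (fun w => ∃ m, pred m ∧ μ'.menMatch m = some w) with hW'
      set Wμ : Finset W := univ.filter (fun w => ∃ m, pred m ∧ μ.menMatch m = some w) with hWμ
      set Sm : Finset M := Mset.filter (fun m => μ.menMatch m ≠ none) with hSm
      have hW'sub : W' ⊆ Wμ := by
        intro w hw
        simp only [hW', hWμ, Finset.mem_filter, Finset.mem_univ, true_and] at hw ⊢
        exact hc1 w hw
      obtain ⟨w₀, hw₀⟩ := pred_some m₁ hm₁
      have hcard1 : Mset.card ≤ W'.card := by
        apply Finset.card_le_card_of_injOn (fun m => (μ'.menMatch m).getD w₀)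
        · intro m hm
          simp only [hMset, Finset.mem_coe, Finset.mem_filter, Finset.mem_univ, true_and] at hm
          obtain ⟨w, hw⟩ := pred_some m hm
          simp only [hW', Finset.mem_coe, Finset.mem_filter, Finset.mem_univ, true_and, hw]
          exact ⟨m, hm, hw⟩
        · intro a ha b hb he
          simp only [Finset.coe_filter, Set.mem_setOf_eq, hMset] at ha hb
          obtain ⟨wa, hwa⟩ := pred_some a ha.2
          obtain ⟨wb, hwb⟩ := pred_some b hb.2
          simp only [hwa, hwb, Option.getD_some] at he
          subst he
          have c₁ := (μ'.consistent a wa).mp hwa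
          have c₂ := (μ'.consistent b wa).mp hwb
          rw [c₁] at c₂
          exact Option.some_inj.mp c₂
      have hcard2 : Wμ.card ≤ Sm.card := by
        apply Finset.card_le_card_of_injOn (fun w => (μ.womenMatch w).getD m₁)
        · intro w hw
          simp only [hWμ, Finset.mem_coe, Finset.mem_filter, Finset.mem_univ, true_and] at hw
          obtain ⟨m, hm, hμm⟩ := hw
          have : μ.womenMatch w = some m := (μ.consistent m w).mp hμm
          simp only [hSm, hMset, Finset.mem_coe, Finset.mem_filter, Finset.mem_univ, true_and, this,
            Option.getD_some]
          exact ⟨hm, by rw [hμm]; simp⟩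
        · intro a ha b hb he
          simp only [Finset.coe_filter, Set.mem_setOf_eq, hWμ] at ha hb
          obtain ⟨ma, hma, hμa⟩ := ha.2
          obtain ⟨mb, hmb, hμb⟩ := hb.2
          have ca : μ.womenMatch a = some ma := (μ.consistent ma a).mp hμa
          have cb : μ.womenMatch b = some mb := (μ.consistent mb b).mp hμb
          simp only [ca, cb, Option.getD_some] at he
          subst he
          rw [hμa] at hμb
          exact Option.some_inj.mp hμb
      have hcard3 : Sm.card ≤ Mset.card := Finset.card_le_card (Finset.filter_subset _ _)
      have hcardW : Wμ.card ≤ W'.card := by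
        have h4 : W'.card ≤ Wμ.card := Finset.card_le_card hW'sub
        omega
      have hWeq : W' = Wμ := Finset.eq_of_subset_of_card_le hW'sub hcardW
      have hWc : W'.card = Wμ.card := by rw [hWeq]
      have hsub' : Sm ⊆ Mset := Finset.filter_subset _ _
      have hSmeq : Sm = Mset := Finset.eq_of_subset_of_card_le hsub' (by omega)
      intro m hp
      have hmem : m ∈ Sm := by rw [hSmeq]; simp [hMset, hp]
      simp only [hSm, Finset.mem_filter] at hmem
      cases hμm : μ.menMatch m with
      | none => exact absurd hμm hmem.2
      | some w₂ =>
        refine ⟨w₂, rfl, ?_⟩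
        have : w₂ ∈ Wμ := by
          simp only [hWμ, Finset.mem_filter, Finset.mem_univ, true_and]
          exact ⟨m, hp, hμm⟩
        rw [← hWeq] at this
        simp only [hW', Finset.mem_filter, Finset.mem_univ, true_and] at this
        exact this
    -- trace argument
    have hμbest : ∀ m, μ.menMatch m = best P (trace P (Fb M W)) m := fun m => rfl
    set F := Fb M W with hFdef
    set evP : ℕ → Prop := fun t => ∃ m w, pred m ∧
        (∃ m'', pred m'' ∧ μ'.menMatch m'' = some w) ∧
        best P (trace P t) m = some w ∧ ∀ s < t, best P (trace P s) m ≠ some w with hevP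
    obtain ⟨w₂, hμm₁, hw₂⟩ := hall m₁ hm₁
    have hF1 : best P (trace P F) m₁ = some w₂ := by rw [← hμbest]; exact hμm₁
    have hexf : ∃ s, best P (trace P s) m₁ = some w₂ := ⟨F, hF1⟩
    have ht₁ : evP (Nat.find hexf) :=
      ⟨m₁, w₂, hm₁, hw₂, Nat.find_spec hexf, fun s hs => Nat.find_min hexf hs⟩
    have ht₁F : Nat.find hexf ≤ F := Nat.find_le hF1
    set Tset : Finset ℕ := (Finset.range (F+1)).filter evP with hTset
    have hTne : Tset.Nonempty := ⟨Nat.find hexf, by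
      simp only [hTset, Finset.mem_filter, Finset.mem_range]
      exact ⟨Nat.lt_succ_of_le ht₁F, ht₁⟩⟩
    set T := Tset.max' hTne with hT
    have hTmem : evP T ∧ T ≤ F := by
      have := Tset.max'_mem hTne
      simp only [hTset, Finset.mem_filter, Finset.mem_range] at this
      exact ⟨this.2, Nat.lt_succ_iff.mp this.1⟩
    have hTmax : ∀ t, t ≤ F → evP t → t ≤ T := by
      intro t htF hev
      apply Tset.le_max'
      simp only [hTset, Finset.mem_filter, Finset.mem_range]
      exact ⟨Nat.lt_succ_of_le htF, hev⟩
    obtain ⟨mb, wb, hpredmb, hwbW', hbT, hmin⟩ := hTmem.1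
    have hTF : T ≤ F := hTmem.2
    -- KEY-A : all rejections of a `pred` man by a `W'` woman happen before T
    have hrej_lt : ∀ m w t, pred m → (∃ m'', pred m'' ∧ μ'.menMatch m'' = some w) →
        best P (trace P t) m = some w → wchoice P (trace P t) w ≠ some m → t < T := by
      intro m w t hp hw' hb hc
      have htF : t < F := rej_bound P hb hc
      have hmem : w ∈ trace P (t+1) m := (mem_step P).mpr (Or.inr ⟨hb, hc⟩)
      have hbFne : best P (trace P F) m ≠ some w := by
        intro hbf
        exact best_eq_some_not_mem P hbf (trace_mono P htF m hmem)
      obtain ⟨v, hμm, hvW'⟩ := hall m hp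
      have hFv : best P (trace P F) m = some v := by rw [← hμbest]; exact hμm
      have hnev : v ≠ w := fun he => hbFne (he ▸ hFv)
      have hexv : ∃ s, best P (trace P s) m = some v := ⟨F, hFv⟩
      have hevv : evP (Nat.find hexv) :=
        ⟨m, v, hp, hvW', Nat.find_spec hexv, fun s hs => Nat.find_min hexv hs⟩
      have hvT : Nat.find hexv ≤ T := hTmax _ (Nat.find_le hFv) hevv
      have htv : t < Nat.find hexv := by
        by_contra hge
        push_neg at hge
        have hle1 : (P.menPref m).le (best P (trace P t) m) (best P (trace P (Nat.find hexv)) m) :=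
          best_trace_anti P hge m
        have hle2 : (P.menPref m).le (best P (trace P F) m) (best P (trace P t) m) :=
          best_trace_anti P (le_of_lt htF) m
        rw [Nat.find_spec hexv] at hle1
        rw [hFv] at hle2
        have : best P (trace P t) m = some v := lle_antisymm _ hle1 hle2
        rw [hb] at this
        exact hnev (Option.some_inj.mp this).symm
      omega
    -- the woman wb has rejected her μ'-partner m' at some round s < T
    obtain ⟨m', hpred', hμ'm'⟩ := hwbW'
    have hltm' : (P.menPref m').lt (μ.menMatch m') (some wb) := hμ'm' ▸ hpred'
    have hwbmem : wb ∈ trace P F m' := by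
      by_contra hnm
      have := le_best_of_not_mem P hnm
      rw [← hμbest] at this
      exact llt_irrefl _ (llt_of_le_of_lt _ this hltm')
    obtain ⟨s, hsF, hbs, hcs⟩ := exists_entry P hwbmem
    have hsT : s < T := hrej_lt m' wb s hpred' ⟨m', hpred', hμ'm'⟩ hbs hcs
    have hμ'w : μ'.womenMatch wb = some m' := (μ'.consistent m' wb).mp hμ'm'
    have hIRwb : (P.womenPref wb).le none (some m') := by
      have := hIR.2 wb; rwa [hμ'w] at this
    have hltc : (P.womenPref wb).lt (some m') (wchoice P (trace P s) wb) :=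
      llt_of_le_of_ne _ (le_wchoice P ((mem_props P).mpr hbs)) (fun h => hcs h.symm)
    have hltcT : (P.womenPref wb).lt (some m') (wchoice P (trace P (T-1)) wb) :=
      llt_of_lt_of_le _ hltc (wchoice_mono P (by omega) wb)
    cases hcT : wchoice P (trace P (T-1)) wb with
    | none =>
      rw [hcT] at hltcT
      exact absurd (llt_of_le_of_lt _ hIRwb hltcT) (fun h => llt_irrefl _ h)
    | some m₀ =>
      rw [hcT] at hltcT
      have hbstm₀ : best P (trace P (T-1)) m₀ = some wb := wchoice_some P hcT
      -- mb keeps proposing to wb from T on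
      have hconst : ∀ k, T + k ≤ F → best P (trace P (T+k)) mb = some wb := by
        intro k
        induction k with
        | zero => intro _; simpa using hbT
        | succ k ih =>
          intro hkF
          have hk := ih (by omega)
          by_contra hnk
          have hch : wchoice P (trace P (T+k)) wb ≠ some mb := best_change P hk (by
            rw [show T + (k+1) = (T+k)+1 from rfl] at hnk
            exact hnk)
          have := hrej_lt mb wb (T+k) hpredmb ⟨m', hpred', hμ'm'⟩ hk hch
          omega
      have hbFmb : best P (trace P F) mb = some wb := by
        have := hconst (F - T) (by omega)
        rwa [show T + (F - T) = F by omega] at this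
      have hμmb : μ.menMatch mb = some wb := by rw [hμbest]; exact hbFmb
      have hm₀mb : m₀ ≠ mb := by
        intro he
        subst he
        exact hmin (T-1) (by omega) hbstm₀
      have hμm₀ne : μ.menMatch m₀ ≠ some wb := by
        intro he
        have c₁ := (μ.consistent m₀ wb).mp he
        have c₂ := (μ.consistent mb wb).mp hμmb
        rw [c₁] at c₂
        exact hm₀mb (Option.some_inj.mp c₂)
      have hbF₀ : best P (trace P F) m₀ ≠ some wb := by rw [← hμbest]; exact hμm₀ne
      obtain ⟨t', ht'ge, ht'lt, ht'eq, ht'ne⟩ :=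
        exists_change (f := fun t => best P (trace P t) m₀) hbstm₀ hbF₀ (by omega)
      have hrej' : wchoice P (trace P t') wb ≠ some m₀ := best_change P ht'eq ht'ne
      have ht'T : T ≤ t' := by
        rcases Nat.lt_or_ge t' T with h | h
        · have : t' = T - 1 := by omega
          subst this
          exact absurd hcT hrej'
        · exact h
      have hnotpred : ¬ pred m₀ := by
        intro hp
        have := hrej_lt m₀ wb t' hp ⟨m', hpred', hμ'm'⟩ ht'eq hrej'
        omega
      have hleI : (P.menPref m₀).le (μ.menMatch m₀) (some wb) := by
        rw [hμbest]
        have := best_trace_anti P (show T - 1 ≤ F by omega) m₀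
        rwa [hbstm₀] at this
      have hltI : (P.menPref m₀).lt (μ.menMatch m₀) (some wb) :=
        llt_of_le_of_ne _ hleI hμm₀ne
      have hle' : (P.menPref m₀).le (μ'.menMatch m₀) (μ.menMatch m₀) := lle_of_not_lt _ hnotpred
      refine ⟨m₀, wb, hnotpred, ⟨m', hpred', hμ'm'⟩, llt_of_le_of_lt _ hle' hltI, ?_⟩
      rw [hμ'w]
      exact hltcT

variable {D : Domain M W}

theorem gsp (hTD : TopDominanceWomen D) : GroupStrategyProofOn D mpda := by
  rintro ⟨P, Q, Sm, Sw, hne, hPmem, hQmem, hQm, hQw, hgm, hgw⟩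
  have hμ : MenOptimalStable (mpda P) P := mpda_spec P
  have hν : MenOptimalStable (mpda Q) Q := mpda_spec Q
  set μ := mpda P with hμd
  set ν := mpda Q with hνd
  by_cases hex : ∃ m, (P.menPref m).lt (μ.menMatch m) (ν.menMatch m)
  · -- some man strictly better off: blocking lemma route
    have hIR : IndividuallyRational ν P := by
      constructor
      · intro m
        by_cases hm : (P.menPref m).lt (μ.menMatch m) (ν.menMatch m)
        · exact lle_trans _ (hμ.1.1.1 m) (lle_of_lt _ hm)
        · have hmS : m ∉ Sm := fun hc => hm (hgm m hc)
          rw [← hQm m hmS]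
          exact hν.1.1.1 m
      · intro w
        by_cases hw : w ∈ Sw
        · exact lle_trans _ (hμ.1.1.2 w) (lle_of_lt _ (hgw w hw))
        · rw [← hQw w hw]; exact hν.1.1.2 w
    have hexd : ∃ m, (P.menPref m).lt ((daMatch P).menMatch m) (ν.menMatch m) := by
      rw [← mpda_eq_daMatch]; exact hex
    obtain ⟨mh, wh, hnp, ⟨m'', hm''p, hm''ν⟩, hblk⟩ := blocking_lemma P ν hIR hexd
    rw [← mpda_eq_daMatch P] at hnp hm''p
    have hmhSm : mh ∉ Sm := fun hc => hnp (hgm mh hc)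
    have hwhSw : wh ∈ Sw := by
      by_contra hns
      exact hν.1.2 mh wh ⟨by rw [hQm mh hmhSm]; exact hblk.1, by rw [hQw wh hns]; exact hblk.2⟩
    have hνwh : ν.womenMatch wh = some m'' := (ν.consistent m'' wh).mp hm''ν
    have hgainwh : (P.womenPref wh).lt (μ.womenMatch wh) (some m'') := by
      have := hgw wh hwhSw
      rwa [hνwh] at this
    exact hμ.1.2 m'' wh ⟨hm''ν ▸ hm''p, hgainwh⟩
  · -- no man strictly better off
    have hall : ∀ m, (P.menPref m).le (ν.menMatch m) (μ.menMatch m) := by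
      intro m
      exact lle_of_not_lt _ (fun h => hex ⟨m, h⟩)
    have hSmE : ∀ m, m ∉ Sm := fun m hc => hex ⟨m, hgm m hc⟩
    have hQmall : ∀ m, Q.menPref m = P.menPref m := fun m => hQm m (hSmE m)
    have hSwne : Sw.Nonempty := by
      rcases hne with h | h
      · obtain ⟨m, hm⟩ := h; exact absurd hm (hSmE m)
      · exact h
    have hsomex : ∀ w, w ∈ Sw → ∃ x, ν.womenMatch w = some x := by
      intro w hw
      cases h : ν.womenMatch w with
      | none =>
        have := hgw w hw
        rw [h] at this
        exact absurd (llt_of_le_of_lt _ (hμ.1.1.2 w) this) (fun hc => llt_irrefl _ hc)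
      | some x => exact ⟨x, rfl⟩
    by_cases hQst : Stable μ Q
    · obtain ⟨w₀, hw₀⟩ := hSwne
      obtain ⟨x, hx⟩ := hsomex w₀ hw₀
      have hgain : (P.womenPref w₀).lt (μ.womenMatch w₀) (some x) := by
        have := hgw w₀ hw₀; rwa [hx] at this
      have hνx : ν.menMatch x = some w₀ := (ν.consistent x w₀).mpr hx
      have hle1 : (P.menPref x).le (some w₀) (μ.menMatch x) :=
        lle_of_not_lt _ (fun h => hμ.1.2 x w₀ ⟨h, hgain⟩)
      have hle2 : (Q.menPref x).le (μ.menMatch x) (ν.menMatch x) := hν.2 μ hQst x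
      rw [hQmall x, hνx] at hle2
      have heq : μ.menMatch x = some w₀ := lle_antisymm _ hle2 hle1
      have : μ.womenMatch w₀ = some x := (μ.consistent x w₀).mp heq
      rw [this] at hgain
      exact llt_irrefl _ hgain
    · -- μ is not stable under Q
      rw [Stable, not_and_or] at hQst
      rcases hQst with hIRf | hblkf
      · -- individual rationality of μ fails under Q
        rw [IndividuallyRational, not_and_or] at hIRf
        rcases hIRf with h | h
        · push_neg at h
          obtain ⟨m, hm⟩ := h
          rw [hQmall m] at hm
          exact llt_irrefl _ (llt_of_le_of_lt _ (hμ.1.1.1 m) hm)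
        · push_neg at h
          obtain ⟨w', hw'⟩ := h
          have hw'Sw : w' ∈ Sw := by
            by_contra hns
            rw [hQw w' hns] at hw'
            exact llt_irrefl _ (llt_of_le_of_lt _ (hμ.1.1.2 w') hw')
          have hltQ : (Q.womenPref w').lt (μ.womenMatch w') none := hw'
          obtain ⟨x', hx'⟩ := hsomex w' hw'Sw
          have hgain : (P.womenPref w').lt (μ.womenMatch w') (some x') := by
            have := hgw w' hw'Sw; rwa [hx'] at this
          have hIRP : (P.womenPref w').le none (μ.womenMatch w') := hμ.1.1.2 w'
          have hynn : μ.womenMatch w' ≠ none := by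
            intro he
            rw [he] at hltQ
            exact llt_irrefl _ hltQ
          have hIRQν : (Q.womenPref w').le none (ν.womenMatch w') := hν.1.1.2 w'
          rw [hx'] at hIRQν
          exact hTD w' x' (μ.womenMatch w') none
            ⟨P.womenPref w', hPmem.2 w', hgain,
              llt_of_le_of_ne _ hIRP (fun he => hynn he.symm), hIRP⟩
            ⟨Q.womenPref w', hQmem.2 w',
              llt_of_le_of_ne _ hIRQν (fun he => by cases he), hltQ,
              lle_refl _ _⟩
      · -- a blocking pair for μ under Q
        push_neg at hblkf
        obtain ⟨m, w', hblkQ⟩ := hblkf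
        obtain ⟨hb1, hb2⟩ := hblkQ
        rw [hQmall m] at hb1
        have hw'Sw : w' ∈ Sw := by
          by_contra hns
          rw [hQw w' hns] at hb2
          exact hμ.1.2 m w' ⟨hb1, hb2⟩
        obtain ⟨x', hx'⟩ := hsomex w' hw'Sw
        have hgain : (P.womenPref w').lt (μ.womenMatch w') (some x') := by
          have := hgw w' hw'Sw; rwa [hx'] at this
        have hle_my : (P.womenPref w').le (some m) (μ.womenMatch w') :=
          lle_of_not_lt _ (fun h => hμ.1.2 m w' ⟨hb1, h⟩)
        have hne_my : some m ≠ μ.womenMatch w' := by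
          intro he
          rw [← he] at hb2
          exact llt_irrefl _ hb2
        have hlt_my : (P.womenPref w').lt (some m) (μ.womenMatch w') :=
          llt_of_le_of_ne _ hle_my hne_my
        have hνblk : ¬ Blocks m w' ν Q := hν.1.2 m w'
        have hb1ν : (Q.menPref m).lt (ν.menMatch m) (some w') := by
          rw [hQmall m]
          exact llt_of_le_of_lt _ (hall m) hb1
        have hle_mx : (Q.womenPref w').le (some m) (ν.womenMatch w') :=
          lle_of_not_lt _ (fun h => hνblk ⟨hb1ν, h⟩)
        rw [hx'] at hle_mx
        have hne_mx : m ≠ x' := by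
          intro he
          subst he
          have hc : ν.menMatch m = some w' := (ν.consistent m w').mpr hx'
          rw [hc] at hb1ν
          exact llt_irrefl _ hb1ν
        have hlt_mxQ : (Q.womenPref w').lt (some m) (some x') :=
          llt_of_le_of_ne _ hle_mx (fun he => hne_mx (Option.some_inj.mp he))
        have hIRQx : (Q.womenPref w').le none (some x') := by
          have := hν.1.1.2 w'; rwa [hx'] at this
        have hIRQxlt : (Q.womenPref w').lt none (some x') :=
          llt_of_le_of_ne _ hIRQx (fun he => by cases he)
        have hIRPy : (P.womenPref w').le none (μ.womenMatch w') := hμ.1.1.2 w'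
        cases hy' : μ.womenMatch w' with
        | none =>
          rw [hy'] at hgain hlt_my hb2
          exact hTD w' x' none (some m)
            ⟨P.womenPref w', hPmem.2 w', hgain, hlt_my, lle_refl _ _⟩
            ⟨Q.womenPref w', hQmem.2 w', hlt_mxQ, hb2, lle_of_lt _ hb2⟩
        | some ym =>
          rw [hy'] at hgain hlt_my hb2 hIRPy
          by_cases hQ0 : (Q.womenPref w').le none (some m)
          · exact hTD w' x' (some ym) (some m)
              ⟨P.womenPref w', hPmem.2 w', hgain, hlt_my, hIRPy⟩
              ⟨Q.womenPref w', hQmem.2 w', hlt_mxQ, hb2, hQ0⟩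
          · have hQm_lt : (Q.womenPref w').lt (some m) none := (lnot_le _).mp hQ0
            exact hTD w' x' (some ym) none
              ⟨P.womenPref w', hPmem.2 w', hgain,
                llt_of_le_of_ne _ hIRPy (fun he => by cases he), hIRPy⟩
              ⟨Q.womenPref w', hQmem.2 w', hIRQxlt, llt_trans _ hb2 hQm_lt, lle_refl _ _⟩

theorem sp (hTD : TopDominanceWomen D) : StrategyProofOn D mpda := by
  have hG := gsp (D := D) hTD
  intro P hP
  constructor
  · intro m p hpD
    by_contra hc
    apply hG
    refine ⟨P, P.updateMan m p, {m}, ∅, Or.inl ⟨m, rfl⟩, hP, ?_, ?_, ?_, ?_, ?_⟩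
    · refine ⟨fun m' => ?_, hP.2⟩
      by_cases h : m' = m
      · subst h
        simpa only [Profile.updateMan, Function.update_self] using hpD
      · simpa only [Profile.updateMan, Function.update_of_ne h] using hP.1 m'
    · intro m' hm'
      simp only [Profile.updateMan]
      rw [Function.update_of_ne (by simpa using hm')]
    · intro w _; rfl
    · intro m' hm'
      rw [Set.mem_singleton_iff] at hm'
      subst hm'
      exact (lnot_le _).mp hc
    · intro w hw; cases hw
  · intro w p hpD
    by_contra hc
    apply hG
    refine ⟨P, P.updateWoman w p, ∅, {w}, Or.inr ⟨w, rfl⟩, hP, ?_, ?_, ?_, ?_, ?_⟩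
    · refine ⟨hP.1, fun w' => ?_⟩
      by_cases h : w' = w
      · subst h
        simpa only [Profile.updateWoman, Function.update_self] using hpD
      · simpa only [Profile.updateWoman, Function.update_of_ne h] using hP.2 w'
    · intro m _; rfl
    · intro w' hw'
      simp only [Profile.updateWoman]
      rw [Function.update_of_ne (by simpa using hw')]
    · intro m hm; cases hm
    · intro w' hw'
      rw [Set.mem_singleton_iff] at hw'
      subst hw'
      exact (lnot_le _).mp hc

theorem uniqueness
    (htop : ∀ m : M, ∀ w : W, ∃ p ∈ D.men m, p.lt none (some w) ∧
        ∀ z : Option W, z ≠ some w → z ≠ none → p.lt z none)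
    (phi : Profile M W → Matching M W) (hst : StableOn D phi) (hsp : StrategyProofOn D phi)
    (P : Profile M W) (hP : D.mem P) : phi P = mpda P := by
  have hμ : MenOptimalStable (mpda P) P := mpda_spec P
  have hφ : Stable (phi P) P := hst P hP
  apply Matching.ext'
  intro m
  by_contra hne
  have hlt : (P.menPref m).lt ((phi P).menMatch m) ((mpda P).menMatch m) :=
    llt_of_le_of_ne _ (hμ.2 (phi P) hφ m) hne
  obtain ⟨w, hw⟩ : ∃ w, (mpda P).menMatch m = some w := by
    cases h : (mpda P).menMatch m with
    | none =>
      rw [h] at hlt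
      exact absurd (llt_of_le_of_lt _ (hφ.1.1 m) hlt) (fun hc => llt_irrefl _ hc)
    | some w => exact ⟨w, rfl⟩
  obtain ⟨p, hpD, hp1, hp2⟩ := htop m w
  -- facts about the truncation p : w on top, ∅ second
  have hptop : ∀ z : Option W, z ≠ some w → p.lt z (some w) := by
    intro z hz
    by_cases h : z = none
    · subst h; exact hp1
    · exact llt_trans _ (hp2 z hz h) hp1
  have hple : ∀ z : Option W, p.le z (some w) := by
    intro z
    by_cases h : z = some w
    · subst h; exact lle_refl _ _
    · exact lle_of_lt _ (hptop z h)
  set P₂ := P.updateMan m p with hP₂d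
  have hP₂mem : D.mem P₂ := by
    refine ⟨fun m' => ?_, hP.2⟩
    by_cases h : m' = m
    · subst h
      simpa only [P₂, Profile.updateMan, Function.update_self] using hpD
    · simpa only [P₂, Profile.updateMan, Function.update_of_ne h] using hP.1 m'
  have hP₂m : P₂.menPref m = p := by
    simp only [P₂, Profile.updateMan, Function.update_self]
  have hP₂m' : ∀ m', m' ≠ m → P₂.menPref m' = P.menPref m' := by
    intro m' h
    simp only [P₂, Profile.updateMan]
    rw [Function.update_of_ne h]
  have hP₂w : P₂.womenPref = P.womenPref := rfl
  -- mpda P is stable under P₂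
  have hμP₂ : Stable (mpda P) P₂ := by
    refine ⟨⟨fun m' => ?_, fun w' => hμ.1.1.2 w'⟩, fun m' w' hblk => ?_⟩
    · by_cases h : m' = m
      · subst h
        rw [hP₂m, hw]
        exact hple none
      · rw [hP₂m' m' h]
        exact hμ.1.1.1 m'
    · obtain ⟨hb1, hb2⟩ := hblk
      by_cases h : m' = m
      · subst h
        rw [hP₂m, hw] at hb1
        exact llt_asymm _ hb1 (hptop (some w') (fun he => llt_ne _ hb1 he.symm))
      · rw [hP₂m' m' h] at hb1
        exact hμ.1.2 m' w' ⟨hb1, hb2⟩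
  have hν₂ : MenOptimalStable (mpda P₂) P₂ := mpda_spec P₂
  have hν₂m : (mpda P₂).menMatch m = some w := by
    have hle := hν₂.2 (mpda P) hμP₂ m
    rw [hP₂m, hw] at hle
    exact lle_antisymm _ (by rw [← hP₂m]; exact (hP₂m ▸ hple ((mpda P₂).menMatch m))) hle
  -- φ at P₂ also matches m to w, by the counting lemma
  have hφ₂ : Stable (phi P₂) P₂ := hst P₂ hP₂mem
  have hmeq := matched_eq P₂ hν₂ hφ₂
  have hmmem : m ∈ mFin (mpda P₂) := by
    simp only [mFin, Finset.mem_filter, Finset.mem_univ, true_and, hν₂m]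
    simp
  rw [← hmeq] at hmmem
  obtain ⟨w'', hw''⟩ := mem_mFin_some hmmem
  have hw''w : w'' = w := by
    by_contra hne'
    have hIR := hφ₂.1.1 m
    rw [hP₂m, hw''] at hIR
    exact absurd (llt_of_le_of_lt _ hIR (hp2 (some w'') (fun he => hne' (Option.some_inj.mp he))
      (fun he => by cases he))) (fun hc => llt_irrefl _ hc)
  subst hw''w
  -- strategy-proofness of φ violated
  have := (hsp P hP).1 m p hpD
  rw [show P.updateMan m p = P₂ from rfl, hw''] at this
  rw [hw] at hlt
  exact llt_irrefl _ (llt_of_le_of_lt _ this hlt)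

end DA

/-- if for each man every woman can be ranked first with the
outside option second, and the domain satisfies top dominance for women, then
MPDA is the unique stable and strategy-proof rule on the domain, and it is
moreover group strategy-proof. -/
theorem mpda_unique_stable_sp_and_gsp [Fintype M] [Fintype W]
    [DecidableEq M] [DecidableEq W] (D : Domain M W)
    (htop : ∀ m : M, ∀ w : W, ∃ P ∈ D.men m, P.lt none (some w) ∧
        ∀ z : Option W, z ≠ some w → z ≠ none → P.lt z none)
    (hTD : TopDominanceWomen D) :
    (StableOn D mpda ∧ StrategyProofOn D mpda ∧ GroupStrategyProofOn D mpda) ∧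
    (∀ phi : Profile M W → Matching M W, StableOn D phi → StrategyProofOn D phi →
      ∀ P : Profile M W, D.mem P → phi P = mpda P) := by
  constructor
  · exact ⟨fun P _ => (DA.mpda_spec P).1, DA.sp (D := D) hTD, DA.gsp (D := D) hTD⟩
  · exact fun phi hst hsp P hP => DA.uniqueness htop phi hst hsp P hP
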